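/- Let p ∈ ℝ[u₁,…,u_g] be a real zero (RZ) polynomial: p(0) ≠ 0 and for every α ∈ ℝ^g the univariate polynomial p(tα) ∈ ℝ[t] has only real roots. Let q ∈ ℂ[u₁,…,u_g]. If q(α) = 0 whenever p(α) = 0 for all α ∈ ℝ^g, then q(α) = 0 whenever p(α) = 0 for all α ∈ ℂ^g. -/

import Mathlib

noncomputable section
open Polynomial

abbrev A2 : Type := Polynomial (Polynomial ℂ)

noncomputable def evA (u v : ℂ) : A2 →ₐ[ℂ] ℂ :=
  (Polynomial.aeval v).comp (Polynomial.mapAlgHom (Polynomial.aeval u))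

@[simp] lemma evA_CC (u v c : ℂ) : evA u v (C (C c)) = c := by simp [evA]
@[simp] lemma evA_CX (u v : ℂ) : evA u v (C X) = u := by simp [evA]
@[simp] lemma evA_X (u v : ℂ) : evA u v (X : A2) = v := by simp [evA]

lemma evA_eq (u v : ℂ) (f : A2) :
    evA u v f = Polynomial.eval v (f.map (Polynomial.evalRingHom u)) := by
  simp [evA, Polynomial.mapAlgHom, Polynomial.aeval_def, Polynomial.eval_map]

lemma ext2 {S : Type*} [Semiring S] [Algebra ℂ S] {f g : A2 →ₐ[ℂ] S}
    (h1 : f (C X) = g (C X)) (h2 : f X = g X) : f = g := by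
  apply Polynomial.algHom_ext'
  · apply Polynomial.algHom_ext
    simpa using h1
  · exact h2

noncomputable def Θ : A2 →ₐ[ℂ] A2 :=
  ((Polynomial.aeval ((C X * X : A2))).restrictScalars ℂ).comp
    (Polynomial.mapAlgHom (Polynomial.aeval (X : A2)))

lemma theta_key (b τ : ℂ) : (evA b τ).comp Θ = evA τ (b * τ) := by
  apply ext2 <;> simp [Θ]

lemma theta_apply (b τ : ℂ) (f : A2) : evA b τ (Θ f) = evA τ (b * τ) f := by
  rw [← theta_key]; rfl

lemma eval_phi (b τ : ℂ) (f : A2) :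
    Polynomial.eval τ ((Θ f).map (Polynomial.evalRingHom b)) = evA τ (b * τ) f := by
  rw [← theta_apply, evA_eq]

/-- If a polynomial in `A2` is "constant along all lines through the origin", it is constant. -/
lemma INF (h : A2) (hnu : ¬ IsUnit h) (h00 : evA 0 0 h ≠ 0)
    (hreal : ∀ (a b : ℝ) (t : ℂ), evA (t * a) (t * b) h = 0 → t.im = 0) :
    {uv : ℝ × ℝ | evA uv.1 uv.2 h = 0}.Infinite := by
  -- First, find a coefficient of Θ h of index ≥ 1 that is nonzero.
  by_cases hcoeff : ∃ n, 1 ≤ n ∧ (Θ h).coeff n ≠ 0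
  · obtain ⟨n, hn1, hcn⟩ := hcoeff
    -- good slopes
    have hfin : {b : ℝ | Polynomial.eval (b : ℂ) ((Θ h).coeff n) = 0}.Finite := by
      have : {x : ℂ | Polynomial.IsRoot ((Θ h).coeff n) x}.Finite :=
        Polynomial.finite_setOf_isRoot hcn
      exact Set.Finite.preimage (fun x _ y _ hxy => by exact_mod_cast hxy) this
    have hgood : {b : ℝ | Polynomial.eval (b : ℂ) ((Θ h).coeff n) ≠ 0}.Infinite := by
      have h2 := Set.Finite.infinite_compl hfin
      have he : {b : ℝ | Polynomial.eval (b : ℂ) ((Θ h).coeff n) ≠ 0}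
          = {b : ℝ | Polynomial.eval (b : ℂ) ((Θ h).coeff n) = 0}ᶜ := by
        ext b; simp
      rw [he]; exact h2
    -- for each good b, produce a real zero
    have hex : ∀ b : ℝ, Polynomial.eval (b : ℂ) ((Θ h).coeff n) ≠ 0 →
        ∃ uv : ℝ × ℝ, evA uv.1 uv.2 h = 0 ∧ uv.1 ≠ 0 ∧ uv.2 = uv.1 * b := by
      intro b hb
      set φ := (Θ h).map (Polynomial.evalRingHom (b : ℂ)) with hφ
      have hφn : φ.coeff n ≠ 0 := by simpa [hφ, Polynomial.coeff_map] using hb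
      have hdeg : 0 < φ.degree := by
        have : (n : WithBot ℕ) ≤ φ.degree := Polynomial.le_degree_of_ne_zero hφn
        calc (0 : WithBot ℕ) < (n : WithBot ℕ) := by exact_mod_cast hn1
        _ ≤ φ.degree := this
      obtain ⟨τ, hτ⟩ := Complex.exists_root hdeg
      have hzero : evA τ ((b : ℂ) * τ) h = 0 := by
        rw [← eval_phi]; exact hτ
      have him : τ.im = 0 := by
        apply hreal 1 b τ
        convert hzero using 2 <;> push_cast <;> ring
      have hτ0 : τ ≠ 0 := by
        rintro rfl
        simp only [mul_zero] at hzero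
        exact h00 hzero
      refine ⟨(τ.re, τ.re * b), ?_, ?_, rfl⟩
      · have hτre : (τ.re : ℂ) = τ := by
          exact Complex.ext rfl (by simp [him])
        simpa [hτre, mul_comm] using hzero
      · simp only [ne_eq]
        intro hre
        exact hτ0 (Complex.ext hre him)
    choose f hf1 hf2 hf3 using hex
    classical
    set F : ℝ → ℝ × ℝ := fun b => if hb : Polynomial.eval (b : ℂ) ((Θ h).coeff n) ≠ 0
      then f b hb else (0, 0) with hF
    apply Set.infinite_of_injOn_mapsTo (f := F)
      (s := {b : ℝ | Polynomial.eval (b : ℂ) ((Θ h).coeff n) ≠ 0}) ?_ ?_ hgood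
    · intro b hb b' hb' hFb
      simp only [Set.mem_setOf_eq] at hb hb'
      rw [hF] at hFb
      simp only [dif_pos hb, dif_pos hb'] at hFb
      have h1 : (f b hb).1 = (f b' hb').1 := by rw [hFb]
      have h2 : (f b hb).2 = (f b' hb').2 := by rw [hFb]
      rw [hf3 b hb, hf3 b' hb', h1] at h2
      exact mul_left_cancel₀ (hf2 b' hb') h2
    · intro b hb
      simp only [Set.mem_setOf_eq] at hb ⊢
      rw [hF]; simp only [dif_pos hb]
      exact hf1 b hb
  · -- all higher coefficients vanish: h is constant, contradiction
    exfalso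
    push_neg at hcoeff
    set c₀ := (Θ h).coeff 0 with hc₀
    have hΘ : Θ h = C c₀ := by
      ext m
      rcases Nat.eq_zero_or_pos m with rfl | hm
      · simp [hc₀]
      · rw [hcoeff m hm]
        simp [Polynomial.coeff_C, Nat.pos_iff_ne_zero.mp hm]
    set k := evA 0 0 h with hk
    have hconst : ∀ b₀ : ℂ, Polynomial.eval b₀ c₀ = k := by
      intro b₀
      have := eval_phi b₀ 0 h
      rw [hΘ] at this
      simpa using this
    have hc₀C : c₀ = C k := Polynomial.funext (fun x => by simp [hconst x])
    have hval : ∀ u v : ℂ, u ≠ 0 → evA u v h = k := by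
      intro u v hu
      have := eval_phi (v / u) u h
      rw [hΘ, hc₀C] at this
      simpa [div_mul_cancel₀ v hu] using this.symm
    have hhC : h = C (C k) := by
      have hdiff : ∀ u : ℂ, u ≠ 0 → (h - C (C k)).map (Polynomial.evalRingHom u) = 0 := by
        intro u hu
        apply Polynomial.funext (q := 0)
        intro v
        have : evA u v (h - C (C k)) = 0 := by
          rw [map_sub, hval u v hu, evA_CC, sub_self]
        rw [evA_eq] at this
        simpa using this
      have hco : ∀ m : ℕ, (h - C (C k)).coeff m = 0 := by
        intro m
        apply Polynomial.eq_zero_of_infinite_isRoot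
        apply Set.Infinite.mono (s := {u : ℂ | u ≠ 0})
        · intro u hu
          have := hdiff u hu
          have h2 : ((h - C (C k)).map (Polynomial.evalRingHom u)).coeff m = 0 := by
            rw [this]; simp
          rw [Polynomial.coeff_map] at h2
          exact h2
        · exact Set.Finite.infinite_compl (Set.finite_singleton 0)
      have : h - C (C k) = 0 := Polynomial.ext (fun m => by rw [hco m]; simp)
      exact sub_eq_zero.mp this
    apply hnu
    rw [hhC]
    exact Polynomial.isUnit_C.mpr (Polynomial.isUnit_C.mpr (isUnit_iff_ne_zero.mpr h00))

abbrev KK : Type := FractionRing (Polynomial ℂ)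

open scoped nonZeroDivisors

noncomputable instance : EuclideanDomain (Polynomial KK) := Polynomial.instEuclideanDomain
lemma line_dvd (f : A2) (u : ℂ) (hf : f.map (Polynomial.evalRingHom u) = 0) :
    (C (X - C u) : A2) ∣ f := by
  rw [Polynomial.C_dvd_iff_dvd_coeff]
  intro k
  rw [Polynomial.dvd_iff_isRoot]
  have h2 : (f.map (Polynomial.evalRingHom u)).coeff k = 0 := by rw [hf]; simp
  rw [Polynomial.coeff_map] at h2
  exact h2

lemma evA_C (u v : ℂ) (w : Polynomial ℂ) : evA u v (C w) = Polynomial.eval u w := by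
  rw [evA_eq]; simp

lemma smul_CK {K : Type*} [CommRing K] [Algebra (Polynomial ℂ) K]
    (r : Polynomial ℂ) (p : Polynomial K) :
    r • p = C (algebraMap (Polynomial ℂ) K r) * p := by
  ext m
  rw [Polynomial.coeff_smul, Polynomial.coeff_C_mul, Algebra.smul_def]

set_option synthInstance.maxHeartbeats 1000000 in
set_option maxHeartbeats 1000000 in
lemma bezout_dvd (h G : A2) (hp : Prime h) (Z : Set (ℂ × ℂ)) (hZ : Z.Infinite)
    (hzero : ∀ z ∈ Z, evA z.1 z.2 h = 0 ∧ evA z.1 z.2 G = 0) : h ∣ G := by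
  by_cases hU : (Prod.fst '' Z).Finite
  · -- vertical line case
    have hfib : ∃ u ∈ Prod.fst '' Z, {z ∈ Z | z.1 = u}.Infinite := by
      by_contra hcon
      push_neg at hcon
      apply hZ
      have hsub : Z ⊆ ⋃ u ∈ Prod.fst '' Z, {z ∈ Z | z.1 = u} := by
        intro z hz
        simp only [Set.mem_iUnion, Set.mem_setOf_eq]
        exact ⟨z.1, ⟨z, hz, rfl⟩, hz, rfl⟩
      exact Set.Finite.subset
        (Set.Finite.biUnion hU (fun u hu => hcon u hu)) hsub
    obtain ⟨u, _, hfiber⟩ := hfib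
    have hsndinf : (Prod.snd '' {z ∈ Z | z.1 = u}).Infinite := by
      apply Set.Infinite.image ?_ hfiber
      rintro ⟨a1, a2⟩ ⟨_, ha⟩ ⟨b1, b2⟩ ⟨_, hb⟩ hab
      simp only at ha hb hab
      rw [ha, hb, hab]
    have key : ∀ f : A2, (∀ z ∈ Z, evA z.1 z.2 f = 0) → (C (X - C u) : A2) ∣ f := by
      intro f hfz
      apply line_dvd
      apply Polynomial.eq_zero_of_infinite_isRoot
      apply Set.Infinite.mono ?_ hsndinf
      rintro v ⟨z, ⟨hzZ, hz1⟩, rfl⟩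
      have := hfz z hzZ
      rw [evA_eq, hz1] at this
      exact this
    have hπh : (C (X - C u) : A2) ∣ h := key h (fun z hz => (hzero z hz).1)
    have hπG : (C (X - C u) : A2) ∣ G := key G (fun z hz => (hzero z hz).2)
    obtain ⟨k, hk⟩ := hπh
    rcases hp.irreducible.isUnit_or_isUnit hk with hunit | hunit
    · exact absurd (Polynomial.isUnit_C.mp hunit) (Polynomial.not_isUnit_X_sub_C u)
    · obtain ⟨ku, hku⟩ := hunit
      have hdvd : h ∣ (C (X - C u) : A2) :=
        ⟨↑ku⁻¹, by rw [hk, ← hku, mul_assoc, Units.mul_inv, mul_one]⟩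
      exact dvd_trans hdvd hπG
  · -- infinitely many first coordinates
    have hUinf : (Prod.fst '' Z).Infinite := hU
    have hroot : ∀ d : Polynomial ℂ, (∀ z ∈ Z, Polynomial.eval z.1 d = 0) → d = 0 := by
      intro d hd
      apply Polynomial.eq_zero_of_infinite_isRoot
      apply Set.Infinite.mono ?_ hUinf
      rintro u ⟨z, hz, rfl⟩
      exact hd z hz
    have hh0 : h ≠ 0 := hp.ne_zero
    have hdeg : h.natDegree ≠ 0 := by
      intro hd0
      obtain ⟨w, hw⟩ := Polynomial.natDegree_eq_zero.mp hd0
      have hw0 : w = 0 := by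
        apply hroot
        intro z hz
        have hz1 := (hzero z hz).1
        rw [← hw, evA_C] at hz1
        exact hz1
      rw [← hw, hw0] at hh0
      simp at hh0
    have hprim : h.IsPrimitive := by
      intro r hr
      obtain ⟨k, hk⟩ := hr
      rcases hp.irreducible.isUnit_or_isUnit hk with hu1 | hu2
      · exact Polynomial.isUnit_C.mp hu1
      · obtain ⟨r', _, hCr'⟩ := Polynomial.isUnit_iff.mp hu2
        exfalso; apply hdeg
        rw [hk, ← hCr', ← Polynomial.C_mul, Polynomial.natDegree_C]
    have hinj : Function.Injective (algebraMap (Polynomial ℂ) KK) := IsFractionRing.injective _ _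
    have hirr' : Irreducible (h.map (algebraMap (Polynomial ℂ) KK)) :=
      (Polynomial.IsPrimitive.irreducible_iff_irreducible_map_fraction_map hprim).mp hp.irreducible
    by_cases hdvd : h.map (algebraMap (Polynomial ℂ) KK) ∣ G.map (algebraMap (Polynomial ℂ) KK)
    · by_cases hG0 : G = 0
      · rw [hG0]; exact dvd_zero h
      have hcne : G.content ≠ 0 := fun hc => hG0 (Polynomial.content_eq_zero_iff.mp hc)
      have hdvd2 : h.map (algebraMap (Polynomial ℂ) KK) ∣ (Polynomial.C ((algebraMap (Polynomial ℂ) KK) G.content)) * (G.primPart.map (algebraMap (Polynomial ℂ) KK)) := by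
        rw [← Polynomial.map_C, ← Polynomial.map_mul, ← Polynomial.eq_C_content_mul_primPart G]
        exact hdvd
      have hprime' : Prime (h.map (algebraMap (Polynomial ℂ) KK)) := hirr'.prime
      rcases hprime'.2.2 _ _ hdvd2 with h1 | h2
      · exfalso
        have hunit : IsUnit (Polynomial.C ((algebraMap (Polynomial ℂ) KK) G.content)) := by
          apply Polynomial.isUnit_C.mpr
          apply isUnit_iff_ne_zero.mpr
          intro hh
          exact hcne (by
            apply hinj
            rw [hh, map_zero])
        exact hirr'.not_isUnit (isUnit_of_dvd_unit h1 hunit)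
      · have hdvd3 : h ∣ G.primPart :=
          Polynomial.IsPrimitive.dvd_of_fraction_map_dvd_fraction_map hprim
            h2
        exact dvd_trans hdvd3 (Polynomial.primPart_dvd G)
    · exfalso
      have hcop : IsCoprime (h.map (algebraMap (Polynomial ℂ) KK)) (G.map (algebraMap (Polynomial ℂ) KK)) := hirr'.coprime_iff_not_dvd.mpr hdvd
      obtain ⟨a, b, hab⟩ := hcop
      obtain ⟨da, hda⟩ := IsLocalization.integerNormalization_map_to_map (Polynomial ℂ)⁰ a
      obtain ⟨db, hdb⟩ := IsLocalization.integerNormalization_map_to_map (Polynomial ℂ)⁰ b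
      set Na := IsLocalization.integerNormalization (Polynomial ℂ)⁰ a with hNa
      set Nb := IsLocalization.integerNormalization (Polynomial ℂ)⁰ b with hNb
      set E : A2 := C (↑db : Polynomial ℂ) * Na * h + C (↑da : Polynomial ℂ) * Nb * G with hEdef
      have hmapE : E.map (algebraMap (Polynomial ℂ) KK) = Polynomial.C ((algebraMap (Polynomial ℂ) KK) (↑da * ↑db)) := by
        have step1 : E.map (algebraMap (Polynomial ℂ) KK) = Polynomial.C ((algebraMap (Polynomial ℂ) KK) ↑db) * ((↑da : Polynomial ℂ) • a) * h.map (algebraMap (Polynomial ℂ) KK)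
            + Polynomial.C ((algebraMap (Polynomial ℂ) KK) ↑da) * ((↑db : Polynomial ℂ) • b) * G.map (algebraMap (Polynomial ℂ) KK) := by
          rw [hEdef]
          simp only [Polynomial.map_add, Polynomial.map_mul, Polynomial.map_C, hda, hdb]
        rw [step1, smul_CK, smul_CK]
        have step2 : Polynomial.C ((algebraMap (Polynomial ℂ) KK) ↑db) * (Polynomial.C ((algebraMap (Polynomial ℂ) KK) ↑da) * a) * h.map (algebraMap (Polynomial ℂ) KK)
            + Polynomial.C ((algebraMap (Polynomial ℂ) KK) ↑da) * (Polynomial.C ((algebraMap (Polynomial ℂ) KK) ↑db) * b) * G.map (algebraMap (Polynomial ℂ) KK)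
            = Polynomial.C ((algebraMap (Polynomial ℂ) KK) ↑da) * Polynomial.C ((algebraMap (Polynomial ℂ) KK) ↑db) * (a * h.map (algebraMap (Polynomial ℂ) KK) + b * G.map (algebraMap (Polynomial ℂ) KK)) := by
          ring
        rw [step2, hab, mul_one, ← Polynomial.C_mul, ← map_mul]
      have hE : E = Polynomial.C ((↑da : Polynomial ℂ) * (↑db : Polynomial ℂ)) := by
        apply Polynomial.map_injective (algebraMap (Polynomial ℂ) KK) hinj
        rw [hmapE, Polynomial.map_C]
      have hdne : ((↑da : Polynomial ℂ) * (↑db : Polynomial ℂ)) ≠ 0 :=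
        mul_ne_zero (nonZeroDivisors.ne_zero da.2) (nonZeroDivisors.ne_zero db.2)
      apply hdne
      apply hroot
      intro z hz
      have hEz : evA z.1 z.2 E = 0 := by
        rw [hEdef]
        simp [map_add, map_mul, (hzero z hz).1, (hzero z hz).2]
      rw [hE, evA_C] at hEz
      exact hEz


lemma exists_prime_factor (F : A2) (hF : F ≠ 0) (z w : ℂ) (h0 : evA z w F = 0) :
    ∃ h : A2, Prime h ∧ h ∣ F ∧ evA z w h = 0 := by
  obtain ⟨u, hu⟩ := UniqueFactorizationMonoid.factors_prod hF
  have hprod : evA z w ((UniqueFactorizationMonoid.factors F).prod) * evA z w (↑u : A2) = 0 := by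
    rw [← map_mul, hu, h0]
  have hune : evA z w (↑u : A2) ≠ 0 := (u.isUnit.map (evA z w)).ne_zero
  have hprod0 : evA z w ((UniqueFactorizationMonoid.factors F).prod) = 0 := by
    rcases mul_eq_zero.mp hprod with h1 | h1
    · exact h1
    · exact absurd h1 hune
  have hmap : ((UniqueFactorizationMonoid.factors F).map (evA z w)).prod = 0 := by
    rw [← map_multiset_prod]; exact hprod0
  rw [Multiset.prod_eq_zero_iff] at hmap
  obtain ⟨h, hmem, hh0⟩ := Multiset.mem_map.mp hmap
  exact ⟨h, UniqueFactorizationMonoid.prime_of_factor h hmem,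
    dvd_trans (Multiset.dvd_prod hmem) ⟨↑u, hu.symm⟩, hh0⟩

lemma main2 (F G : A2)
    (hF0 : evA 0 0 F ≠ 0)
    (hRZ2 : ∀ (a b : ℝ) (t : ℂ), evA (t * a) (t * b) F = 0 → t.im = 0)
    (hq2 : ∀ u v : ℝ, evA u v F = 0 → evA u v G = 0)
    (z w : ℂ) (hzw : evA z w F = 0) : evA z w G = 0 := by
  have hFne : F ≠ 0 := by rintro rfl; simp at hF0
  obtain ⟨h, hprime, hdvdF, hh0⟩ := exists_prime_factor F hFne z w hzw
  obtain ⟨c, hc⟩ := hdvdF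
  have hevF : ∀ u v : ℂ, evA u v h = 0 → evA u v F = 0 := by
    intro u v hu; rw [hc, map_mul, hu, zero_mul]
  have hh00 : evA 0 0 h ≠ 0 := fun hcon => hF0 (hevF 0 0 hcon)
  have hhreal : ∀ (a b : ℝ) (t : ℂ), evA (t * a) (t * b) h = 0 → t.im = 0 :=
    fun a b t ht => hRZ2 a b t (hevF _ _ ht)
  have hinf := INF h hprime.not_unit hh00 hhreal
  set Z : Set (ℂ × ℂ) :=
    (fun uv : ℝ × ℝ => ((uv.1 : ℂ), (uv.2 : ℂ))) '' {uv : ℝ × ℝ | evA uv.1 uv.2 h = 0}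
    with hZdef
  have hZinf : Z.Infinite := by
    apply Set.Infinite.image ?_ hinf
    rintro ⟨a1, a2⟩ _ ⟨b1, b2⟩ _ hab
    simp only [Prod.mk.injEq] at hab ⊢
    exact_mod_cast hab
  have hdvd : h ∣ G := by
    apply bezout_dvd h G hprime Z hZinf
    rintro z' ⟨uv, huv, rfl⟩
    exact ⟨huv, hq2 uv.1 uv.2 (hevF _ _ huv)⟩
  obtain ⟨m, hm⟩ := hdvd
  rw [hm, map_mul, hh0, zero_mul]

lemma evA_aeval (u v : ℂ) (n : ℕ) (σ : Fin n → A2) (r : MvPolynomial (Fin n) ℂ) :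
    evA u v (MvPolynomial.aeval σ r) = MvPolynomial.eval (fun i => evA u v (σ i)) r := by
  rw [MvPolynomial.comp_aeval_apply, ← MvPolynomial.coe_aeval_eq_eval]; rfl

lemma eval_real (n : ℕ) (p : MvPolynomial (Fin n) ℝ) (β : Fin n → ℝ) :
    MvPolynomial.eval (fun i => (β i : ℂ)) (p.map (algebraMap ℝ ℂ))
      = ((MvPolynomial.eval β p : ℝ) : ℂ) := by
  rw [MvPolynomial.eval_map]
  have h2 := MvPolynomial.eval₂_comp_left (algebraMap ℝ ℂ) (RingHom.id ℝ) β p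
  simp only [RingHomCompTriple.comp_eq, RingHom.comp_id] at h2
  exact h2.symm

open MvPolynomial in
/-- Real zeros of a real zero polynomial control complex zeros. -/
theorem RZ_nullstellensatz (g : ℕ) (p : MvPolynomial (Fin g) ℝ)
    (hp0 : eval (0 : Fin g → ℝ) p ≠ 0)
    (hRZ : ∀ (α : Fin g → ℝ) (t : ℂ),
      eval (fun i => t * (α i : ℂ)) (p.map (algebraMap ℝ ℂ)) = 0 → t.im = 0)
    (q : MvPolynomial (Fin g) ℂ)
    (hq : ∀ α : Fin g → ℝ, eval α p = 0 → eval (fun i => (α i : ℂ)) q = 0) :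
    ∀ α : Fin g → ℂ, eval α (p.map (algebraMap ℝ ℂ)) = 0 → eval α q = 0 := by
  intro α hα
  set x : Fin g → ℝ := fun i => (α i).re with hx
  set y : Fin g → ℝ := fun i => (α i).im with hy
  set σ : Fin g → A2 := fun i => Polynomial.C (Polynomial.C ((x i : ℂ))) * Polynomial.C Polynomial.X + Polynomial.C (Polynomial.C ((y i : ℂ))) * Polynomial.X with hσ
  set F := MvPolynomial.aeval σ (p.map (algebraMap ℝ ℂ)) with hF
  set Gq := MvPolynomial.aeval σ q with hGq
  have hev : ∀ (u v : ℂ) (r : MvPolynomial (Fin g) ℂ),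
      evA u v (MvPolynomial.aeval σ r)
        = MvPolynomial.eval (fun i => (x i : ℂ) * u + (y i : ℂ) * v) r := by
    intro u v r
    rw [evA_aeval]
    have hfe : (fun i => evA u v (σ i)) = (fun i => (x i : ℂ) * u + (y i : ℂ) * v) := by
      funext i
      simp [hσ]
    rw [hfe]
  have h1 : evA 0 0 F ≠ 0 := by
    rw [hF, hev]
    have he : (fun i => (x i : ℂ) * 0 + (y i : ℂ) * 0) = (fun _ => ((0 : ℝ) : ℂ)) := by
      funext i; simp
    rw [he, eval_real]
    simpa using hp0
  have h2 : ∀ (a b : ℝ) (t : ℂ), evA (t * a) (t * b) F = 0 → t.im = 0 := by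
    intro a b t ht
    apply hRZ (fun i => a * x i + b * y i) t
    rw [hF, hev] at ht
    have hfe : (fun i => t * ((a * x i + b * y i : ℝ) : ℂ))
        = (fun i => (x i : ℂ) * (t * a) + (y i : ℂ) * (t * b)) := by
      funext i
      push_cast
      ring
    rw [hfe]
    exact ht
  have h3 : ∀ u v : ℝ, evA u v F = 0 → evA u v Gq = 0 := by
    intro u v hFv
    rw [hF, hev] at hFv
    have he : (fun i => (x i : ℂ) * u + (y i : ℂ) * v)
        = fun i => ((x i * u + y i * v : ℝ) : ℂ) := by
      funext i; push_cast; ring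
    rw [he, eval_real] at hFv
    have hreal0 : MvPolynomial.eval (fun i => x i * u + y i * v) p = 0 := by
      exact_mod_cast hFv
    have hq0 := hq _ hreal0
    rw [hGq, hev, he]
    exact hq0
  have h4 : evA 1 Complex.I F = 0 := by
    rw [hF, hev]
    have he : (fun i => (x i : ℂ) * 1 + (y i : ℂ) * Complex.I) = α := by
      funext i
      rw [hx, hy]
      simp [mul_one, Complex.re_add_im]
    rw [he]
    exact hα
  have h5 := main2 F Gq h1 h2 h3 1 Complex.I h4
  rw [hGq, hev] at h5
  have he : (fun i => (x i : ℂ) * 1 + (y i : ℂ) * Complex.I) = α := by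
    funext i
    rw [hx, hy]
    simp [mul_one, Complex.re_add_im]
  rw [he] at h5
  exact h5
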